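/- arXiv:1805.07686 — 3 statements merged into one kernel-verified Lean document; each statement's English description precedes it below -/
import Mathlib

section
/- With ρ_{≤x} = λ·∫₀^x t·f(t) dt and ρ = λ·m < 1, the following busy-period integral identity holds: ∫₀^∞ (λ·x·f(x))/(1 − ρ_{≤x}) dx = ln(1/(1−ρ)). Equivalently, the expectation E[S/(1−ρ_{≤S})] = ∫₀^∞ (x·f(x))/(1−ρ_{≤x}) dx equals (1/λ)·ln(1/(1−ρ)). (This is the key change-of-variables computation in the paper's proof that the expected relevant busy period started by 2kS work grows only logarithmically in 1/(1−ρ).) -/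
open MeasureTheory Set Filter

/-- Relevant load `ρ_{≤x} = λ ∫₀^x t f(t) dt`. -/
noncomputable def rhoLe (f : ℝ → ℝ) (lam x : ℝ) : ℝ :=
  lam * ∫ t in (0:ℝ)..x, t * f t

/-- **Busy-period integral identity.**
With `ρ_{≤x} = λ ∫₀^x t f(t) dt` and `ρ = λ m < 1`, we have
`∫₀^∞ λ x f(x)/(1 − ρ_{≤x}) dx = ln(1/(1−ρ))`, and equivalently
`E[S/(1−ρ_{≤S})] = ∫₀^∞ x f(x)/(1−ρ_{≤x}) dx = (1/λ) ln(1/(1−ρ))`. -/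
theorem busy_period_log_identity
    (f : ℝ → ℝ) (m : ℝ)
    (hf_meas : Measurable f)
    (hf_nonneg : ∀ x, 0 ≤ f x)
    (hf_zero : ∀ x ≤ 0, f x = 0)
    (hf_prob : ∫ t in Set.Ioi (0:ℝ), f t = 1)
    (hm_int : Integrable (fun t => t * f t) (volume.restrict (Set.Ioi 0)))
    (hm_def : m = ∫ t in Set.Ioi (0:ℝ), t * f t)
    (hm_pos : 0 < m)
    (lam : ℝ) (hlam : lam ∈ Set.Ioo 0 (1/m)) :
    (∫ x in Set.Ioi (0:ℝ), (lam * x * f x) / (1 - rhoLe f lam x)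
        = Real.log (1 / (1 - lam * m)))
    ∧ (∫ x in Set.Ioi (0:ℝ), (x * f x) / (1 - rhoLe f lam x)
        = (1 / lam) * Real.log (1 / (1 - lam * m))) := by
  obtain ⟨hlam0, hlam1⟩ := hlam
  have hρ1 : lam * m < 1 := by
    rw [lt_div_iff₀ hm_pos] at hlam1; linarith
  have hρ0 : 0 ≤ lam * m := by positivity
  set ρ : ℝ := lam * m with hρdef
  -- the density h
  set h : ℝ → ℝ := fun t => lam * (t * f t) with hhdef
  have h_meas : Measurable h := (measurable_id.mul hf_meas).const_mul lam
  have h_zero : ∀ t ≤ 0, h t = 0 := by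
    intro t ht; simp [hhdef, hf_zero t ht]
  have h_nonneg : ∀ t, 0 ≤ h t := by
    intro t
    rcases le_or_gt t 0 with ht | ht
    · rw [h_zero t ht]
    · exact mul_nonneg hlam0.le (mul_nonneg ht.le (hf_nonneg t))
  have h_int_Ioi : IntegrableOn h (Ioi 0) volume := hm_int.const_mul lam
  have h_int : Integrable h volume := by
    have h1 : IntegrableOn h (Iic 0) volume := by
      apply (integrableOn_congr_fun (g := fun _ => (0:ℝ)) ?_ measurableSet_Iic).mpr
        ((integrableOn_const_iff (C := (0:ℝ))).mpr (Or.inl (by simp)))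
      intro t ht; exact h_zero t ht
    have := h1.union h_int_Ioi
    rwa [Iic_union_Ioi, integrableOn_univ] at this
  have h_int_Ioi' : ∫ t in Ioi (0:ℝ), h t = ρ := by
    rw [hhdef]
    simp only []
    rw [MeasureTheory.integral_const_mul, ← hm_def]
  -- the primitive F
  set F : ℝ → ℝ := fun x => ∫ t in (0:ℝ)..x, h t with hFdef
  have hF_rho : ∀ x, rhoLe f lam x = F x := by
    intro x
    rw [rhoLe, hFdef]
    simp only []
    rw [intervalIntegral.integral_const_mul]
  have hF_cont : Continuous F := h_int.continuous_primitive 0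
  have hF_mono : Monotone F := by
    intro a b hab
    have := intervalIntegral.integral_add_adjacent_intervals
      (h_int.intervalIntegrable (a := 0) (b := a)) (h_int.intervalIntegrable (a := a) (b := b))
    have hnn : 0 ≤ ∫ t in a..b, h t :=
      intervalIntegral.integral_nonneg hab (fun u _ => h_nonneg u)
    simp only [hFdef]
    linarith [this]
  have hF_zero : ∀ x ≤ 0, F x = 0 := by
    intro x hx
    rw [hFdef]
    simp only []
    rw [intervalIntegral.integral_of_ge hx]
    have : ∫ t in Ioc x 0, h t = 0 := by
      apply setIntegral_eq_zero_of_forall_eq_zero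
      intro t ht; exact h_zero t ht.2
    rw [this, neg_zero]
  have hF_Ioc : ∀ x : ℝ, 0 ≤ x → F x = ∫ t in Ioc (0:ℝ) x, h t := fun x hx =>
    intervalIntegral.integral_of_le hx
  have hF_le : ∀ x, F x ≤ ρ := by
    intro x
    rcases le_or_gt x 0 with hx | hx
    · rw [hF_zero x hx]; exact hρ0
    · rw [hF_Ioc x hx.le, ← h_int_Ioi']
      apply setIntegral_mono_set h_int_Ioi
        (Eventually.of_forall fun t => h_nonneg t)
        (HasSubset.Subset.eventuallyLE Ioc_subset_Ioi_self)
  have hF_nonneg : ∀ x, 0 ≤ F x := by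
    intro x
    rcases le_or_gt x 0 with hx | hx
    · rw [hF_zero x hx]
    · rw [hF_Ioc x hx.le]
      exact setIntegral_nonneg measurableSet_Ioc fun t _ => h_nonneg t
  have hF_tendsto : Tendsto F atTop (nhds ρ) := by
    rw [← h_int_Ioi']
    exact intervalIntegral_tendsto_integral_Ioi 0 h_int_Ioi tendsto_id
  have hF_meas : Measurable F := hF_mono.measurable
  -- the measure ν
  set ν : Measure ℝ := volume.withDensity (fun t => ENNReal.ofReal (h t)) with hνdef
  have hν_Iic : ∀ a : ℝ, ν (Iic a) = ENNReal.ofReal (F a) := by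
    intro a
    rw [hνdef, withDensity_apply _ measurableSet_Iic]
    rcases le_or_gt a 0 with ha | ha
    · rw [hF_zero a ha, ENNReal.ofReal_zero]
      rw [setLIntegral_congr_fun_ae measurableSet_Iic
        (Eventually.of_forall (fun t (ht : t ∈ Iic a) => by
          rw [h_zero t (le_trans ht ha), ENNReal.ofReal_zero]))]
      simp
    · have hsplit : Iic a = Iic 0 ∪ Ioc 0 a := by rw [Iic_union_Ioc_eq_Iic ha.le]
      rw [hsplit, lintegral_union measurableSet_Ioc (Iic_disjoint_Ioc le_rfl)]
      have h1 : ∫⁻ t in Iic (0:ℝ), ENNReal.ofReal (h t) = 0 := by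
        rw [setLIntegral_congr_fun_ae measurableSet_Iic
          (Eventually.of_forall (fun t (ht : t ∈ Iic (0:ℝ)) => by
            rw [h_zero t ht, ENNReal.ofReal_zero]))]
        simp
      have h2 : ∫⁻ t in Ioc (0:ℝ) a, ENNReal.ofReal (h t) = ENNReal.ofReal (F a) := by
        rw [hF_Ioc a ha.le, ← ofReal_integral_eq_lintegral_ofReal
          (h_int.integrableOn) (Eventually.of_forall fun t => h_nonneg t)]
      rw [h1, h2, zero_add]
  have hν_univ : ν univ = ENNReal.ofReal ρ := by
    rw [hνdef, withDensity_apply _ MeasurableSet.univ, Measure.restrict_univ]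
    have : ∫⁻ t, ENNReal.ofReal (h t) = ∫⁻ t in Iic 0 ∪ Ioi 0, ENNReal.ofReal (h t) := by
      rw [Iic_union_Ioi, Measure.restrict_univ]
    rw [this, lintegral_union measurableSet_Ioi (Iic_disjoint_Ioi le_rfl)]
    have h1 : ∫⁻ t in Iic (0:ℝ), ENNReal.ofReal (h t) = 0 := by
      rw [setLIntegral_congr_fun_ae measurableSet_Iic
        (Eventually.of_forall (fun t (ht : t ∈ Iic (0:ℝ)) => by
          rw [h_zero t ht, ENNReal.ofReal_zero]))]
      simp
    rw [h1, zero_add, ← ofReal_integral_eq_lintegral_ofReal h_int_Ioi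
      (Eventually.of_forall fun t => h_nonneg t), h_int_Ioi']
  have hν_fin : IsFiniteMeasure ν := ⟨by rw [hν_univ]; exact ENNReal.ofReal_lt_top⟩
  -- pushforward is uniform on (0, ρ]
  have hmap : Measure.map F ν = volume.restrict (Ioc 0 ρ) := by
    have : IsFiniteMeasure (Measure.map F ν) := by
      constructor
      rw [Measure.map_apply hF_meas MeasurableSet.univ]
      rw [preimage_univ, hν_univ]
      exact ENNReal.ofReal_lt_top
    apply Measure.ext_of_Iic
    intro c
    rw [Measure.map_apply hF_meas measurableSet_Iic,
      Measure.restrict_apply measurableSet_Iic]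
    rcases lt_or_ge c 0 with hc | hc
    · have : F ⁻¹' Iic c = ∅ := by
        ext x; simp only [mem_preimage, mem_Iic, mem_empty_iff_false, iff_false, not_le]
        exact lt_of_lt_of_le hc (hF_nonneg x)
      rw [this]
      have : Iic c ∩ Ioc 0 ρ = ∅ := by
        ext x; simp only [mem_inter_iff, mem_Iic, mem_Ioc, mem_empty_iff_false, iff_false]
        rintro ⟨h1, h2, _⟩; linarith
      rw [this]; simp
    rcases le_or_gt ρ c with hcρ | hcρ
    · have : F ⁻¹' Iic c = univ := by
        ext x; simp only [mem_preimage, mem_Iic, mem_univ, iff_true]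
        exact le_trans (hF_le x) hcρ
      rw [this, hν_univ]
      have : Iic c ∩ Ioc 0 ρ = Ioc 0 ρ := by
        apply inter_eq_self_of_subset_right
        intro x hx; exact le_trans hx.2 hcρ
      rw [this, Real.volume_Ioc, sub_zero]
    · -- 0 ≤ c < ρ
      set S : Set ℝ := {x | F x ≤ c} with hSdef
      have hS0 : (0:ℝ) ∈ S := by simp [hSdef, hF_zero 0 le_rfl, hc]
      have hSne : S.Nonempty := ⟨0, hS0⟩
      have hSbdd : BddAbove S := by
        obtain ⟨x₀, hx₀⟩ := (hF_tendsto.eventually_const_lt hcρ).exists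
        refine ⟨x₀, fun x hx => ?_⟩
        by_contra hcon
        push_neg at hcon
        exact absurd (le_trans (hF_mono hcon.le) hx) (not_le.mpr hx₀)
      have hSclosed : IsClosed S := isClosed_le hF_cont continuous_const
      set a : ℝ := sSup S with hadef
      have haS : a ∈ S := hSclosed.csSup_mem hSne hSbdd
      have hFa_le : F a ≤ c := haS
      have hFa : F a = c := by
        by_contra hne
        have hlt : F a < c := lt_of_le_of_ne hFa_le hne
        have : ∀ᶠ x in nhds a, F x < c :=
          (hF_cont.continuousAt (x := a)).eventually_lt_const hlt
        obtain ⟨ε, hε, hball⟩ := Metric.eventually_nhds_iff.mp this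
        have : a + ε / 2 ∈ S := by
          have hd : dist (a + ε / 2) a < ε := by
            rw [Real.dist_eq, add_sub_cancel_left, abs_of_pos (half_pos hε)]
            linarith
          exact le_of_lt (hball hd)
        have := le_csSup hSbdd this
        linarith
      have hpre : F ⁻¹' Iic c = Iic a := by
        ext x
        simp only [mem_preimage, mem_Iic]
        constructor
        · intro hx; exact le_csSup hSbdd hx
        · intro hx; exact le_trans (hF_mono hx) hFa_le
      rw [hpre, hν_Iic a, hFa]
      have : Iic c ∩ Ioc 0 ρ = Ioc 0 c := by
        ext x
        simp only [mem_inter_iff, mem_Iic, mem_Ioc]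
        constructor
        · rintro ⟨h1, h2, _⟩; exact ⟨h2, h1⟩
        · rintro ⟨h1, h2⟩; exact ⟨h2, h1, le_trans h2 hcρ.le⟩
      rw [this, Real.volume_Ioc, sub_zero]
  -- the main computation
  set g : ℝ → ℝ := fun u => (1 - u)⁻¹ with hgdef
  have hg_meas : Measurable g := (measurable_const.sub measurable_id).inv
  have key : ∫ x in Set.Ioi (0:ℝ), (lam * x * f x) / (1 - rhoLe f lam x)
      = Real.log (1 / (1 - ρ)) := by
    have step1 : ∫ x in Set.Ioi (0:ℝ), (lam * x * f x) / (1 - rhoLe f lam x)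
        = ∫ x, h x * g (F x) := by
      rw [← intervalIntegral.integral_Iic_add_Ioi (b := (0:ℝ))
        (f := fun x => h x * g (F x)) ?_ ?_]
      · have hIic : ∫ x in Iic (0:ℝ), h x * g (F x) = 0 := by
          apply setIntegral_eq_zero_of_forall_eq_zero
          intro t ht
          show h t * g (F t) = 0
          rw [h_zero t ht, zero_mul]
        rw [hIic, zero_add]
        apply setIntegral_congr_fun measurableSet_Ioi
        intro x _
        show lam * x * f x / (1 - rhoLe f lam x) = h x * g (F x)
        rw [hF_rho, div_eq_mul_inv, hgdef, hhdef]
        ring_nf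
      · apply (integrableOn_congr_fun (g := fun _ => (0:ℝ)) ?_ measurableSet_Iic).mpr
          ((integrableOn_const_iff (C := (0:ℝ))).mpr (Or.inl (by simp)))
        intro t ht
        show h t * g (F t) = 0
        rw [h_zero t ht, zero_mul]
      · -- integrable on Ioi 0 : bounded by h * (1-ρ)⁻¹
        apply Integrable.mono' (g := fun x => h x * (1 - ρ)⁻¹)
          (h_int_Ioi.mul_const _)
          ((h_meas.mul (hg_meas.comp hF_meas)).aestronglyMeasurable)
        apply Eventually.of_forall
        intro x
        show ‖h x * g (F x)‖ ≤ _
        rw [Real.norm_eq_abs, abs_of_nonneg (mul_nonneg (h_nonneg x) ?_)]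
        · apply mul_le_mul_of_nonneg_left ?_ (h_nonneg x)
          rw [hgdef]
          apply inv_anti₀ (by linarith)
          linarith [hF_le x]
        · rw [hgdef]
          apply inv_nonneg.mpr
          linarith [hF_le x]
    rw [step1]
    have step2 : ∫ x, h x * g (F x) = ∫ x, g (F x) ∂ν := by
      rw [hνdef]
      have heq : (fun t => ENNReal.ofReal (h t))
          = fun t => ((Real.toNNReal (h t) : NNReal) : ENNReal) := rfl
      rw [heq, integral_withDensity_eq_integral_smul
        (show Measurable (fun t => Real.toNNReal (h t)) from measurable_real_toNNReal.comp h_meas) (fun x => g (F x))]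
      congr 1
      ext x
      simp only [NNReal.smul_def, smul_eq_mul, Real.coe_toNNReal _ (h_nonneg x)]
    rw [step2]
    have step3 : ∫ x, g (F x) ∂ν = ∫ u, g u ∂(Measure.map F ν) :=
      (integral_map hF_meas.aemeasurable hg_meas.aestronglyMeasurable).symm
    rw [step3, hmap]
    have step4 : ∫ u in Ioc (0:ℝ) ρ, g u = ∫ u in (0:ℝ)..ρ, (1 - u)⁻¹ := by
      rw [intervalIntegral.integral_of_le hρ0]
    rw [step4]
    rw [show (fun u : ℝ => (1 - u)⁻¹) = (fun u => (fun x : ℝ => x⁻¹) (1 - u)) from rfl]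
    rw [intervalIntegral.integral_comp_sub_left (fun x : ℝ => x⁻¹) 1]
    rw [integral_inv (by
      intro hmem
      rw [Set.mem_uIcc] at hmem
      rcases hmem with ⟨h1, _⟩ | ⟨_, h1⟩ <;> linarith)]
    rw [sub_zero, Real.log_div one_ne_zero (by linarith)]
  refine ⟨key, ?_⟩
  have : ∫ x in Set.Ioi (0:ℝ), (x * f x) / (1 - rhoLe f lam x)
      = (1/lam) * ∫ x in Set.Ioi (0:ℝ), (lam * x * f x) / (1 - rhoLe f lam x) := by
    rw [← integral_const_mul]
    apply setIntegral_congr_fun measurableSet_Ioi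
    intro x _
    field_simp
  rw [this, key]
end

section
/- For every x ≥ 0 and every integer k ≥ 1, the improved SRPT-k response time bound is pointwise at most the simpler bound: I_λ(x) ≤ H_λ(x), i.e. (λ∫₀^x t²f(t)dt)/(2(1−ρ_{≤x})²) + k·ρ_{≤x}·x/(1−ρ_{≤x}) + ∫₀^x k/(1−ρ_{≤t}) dt ≤ (λ∫₀^x t²f(t)dt + λx²F̄(x))/(2(1−ρ_{≤x})²) + 2kx/(1−ρ_{≤x}). -/
open MeasureTheory

/-- Tail of the service requirement distribution, `F̄(x) = ∫_x^∞ f(t) dt`. -/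
noncomputable def tailS (f : ℝ → ℝ) (x : ℝ) : ℝ :=
  ∫ t in Set.Ioi x, f t

/-- The paper's simple upper bound `H_λ(x)` on the mean response time of a
size-`x` job under `k`-server SRPT. -/
noncomputable def Hbound (f : ℝ → ℝ) (k : ℕ) (lam x : ℝ) : ℝ :=
  (lam * (∫ t in (0:ℝ)..x, t ^ 2 * f t) + lam * x ^ 2 * tailS f x)
      / (2 * (1 - rhoLe f lam x) ^ 2)
    + 2 * (k : ℝ) * x / (1 - rhoLe f lam x)

/-- The paper's improved upper bound `I_λ(x)` on the mean response time of a
size-`x` job under `k`-server SRPT. -/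
noncomputable def Ibound (f : ℝ → ℝ) (k : ℕ) (lam x : ℝ) : ℝ :=
  (lam * ∫ t in (0:ℝ)..x, t ^ 2 * f t) / (2 * (1 - rhoLe f lam x) ^ 2)
    + (k : ℝ) * rhoLe f lam x * x / (1 - rhoLe f lam x)
    + ∫ t in (0:ℝ)..x, (k : ℝ) / (1 - rhoLe f lam t)

/-- **The improved SRPT-k response time bound is pointwise at most the
simpler bound:** `I_λ(x) ≤ H_λ(x)`. -/
theorem Ibound_le_Hbound
    (f : ℝ → ℝ) (m : ℝ)
    (hf_meas : Measurable f)
    (hf_nonneg : ∀ x, 0 ≤ f x)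
    (hf_zero : ∀ x ≤ 0, f x = 0)
    (hf_prob : ∫ t in Set.Ioi (0:ℝ), f t = 1)
    (hm_int : Integrable (fun t => t * f t) (volume.restrict (Set.Ioi 0)))
    (hm_def : m = ∫ t in Set.Ioi (0:ℝ), t * f t)
    (hm_pos : 0 < m)
    (lam : ℝ) (hlam : lam ∈ Set.Ioo 0 (1/m))
    (x : ℝ) (hx : 0 ≤ x) (k : ℕ) (hk : 1 ≤ k) :
    Ibound f k lam x ≤ Hbound f k lam x := by
  obtain ⟨hlam0, hlam1⟩ := hlam
  set g : ℝ → ℝ := fun t => t * f t with hg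
  have hg_nonneg : ∀ t, 0 ≤ g t := by
    intro t
    rcases le_or_gt t 0 with h | h
    · simp [hg, hf_zero t h]
    · exact mul_nonneg h.le (hf_nonneg t)
  -- ρ y ≤ ρ z for 0 ≤ y ≤ z ≤ ... via interval integrals
  have hm_int' : IntegrableOn g (Set.Ioi 0) := hm_int
  have hgIntOn : ∀ y : ℝ, IntegrableOn g (Set.Ioc 0 y) := fun y =>
    hm_int'.mono_set Set.Ioc_subset_Ioi_self
  have hgII : ∀ y z : ℝ, 0 ≤ y → y ≤ z → IntervalIntegrable g volume y z := by
    intro y z hy hyz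
    rw [intervalIntegrable_iff_integrableOn_Ioc_of_le hyz]
    exact hm_int'.mono_set (fun t ht => lt_of_le_of_lt hy ht.1)
  have hrho_mono : ∀ y z : ℝ, 0 ≤ y → y ≤ z → rhoLe f lam y ≤ rhoLe f lam z := by
    intro y z hy hyz
    have h1 : (∫ t in (0:ℝ)..y, g t) ≤ ∫ t in (0:ℝ)..z, g t := by
      rw [← intervalIntegral.integral_add_adjacent_intervals (hgII 0 y le_rfl hy)
        (hgII y z hy hyz)]
      have : 0 ≤ ∫ t in y..z, g t :=
        intervalIntegral.integral_nonneg hyz (fun t _ => hg_nonneg t)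
      linarith
    exact mul_le_mul_of_nonneg_left h1 hlam0.le
  have hrho_nonneg : ∀ y : ℝ, 0 ≤ y → 0 ≤ rhoLe f lam y := by
    intro y hy
    exact mul_nonneg hlam0.le
      (intervalIntegral.integral_nonneg hy (fun t _ => hg_nonneg t))
  have hrho_lt_one : ∀ y : ℝ, 0 ≤ y → rhoLe f lam y < 1 := by
    intro y hy
    have h1 : (∫ t in (0:ℝ)..y, g t) ≤ m := by
      rw [hm_def, intervalIntegral.integral_of_le hy]
      exact setIntegral_mono_set hm_int
        (Filter.Eventually.of_forall (fun t => hg_nonneg t))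
        (HasSubset.Subset.eventuallyLE Set.Ioc_subset_Ioi_self)
    calc rhoLe f lam y ≤ lam * m :=
          mul_le_mul_of_nonneg_left h1 hlam0.le
      _ < (1/m) * m := by
          exact mul_lt_mul_of_pos_right hlam1 hm_pos
      _ = 1 := by field_simp
  set r := rhoLe f lam x with hr
  have hr1 : r < 1 := hrho_lt_one x hx
  have hd : 0 < 1 - r := by linarith
  have hr0 : 0 ≤ r := hrho_nonneg x hx
  -- tail nonneg
  have htail : 0 ≤ tailS f x :=
    setIntegral_nonneg measurableSet_Ioi (fun t _ => hf_nonneg t)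
  -- continuity of ρ on [0,x], hence integrability of t ↦ k/(1-ρ t)
  have hrho_cont : ContinuousOn (fun t => rhoLe f lam t) (Set.uIcc 0 x) := by
    have hint : IntegrableOn g (Set.uIcc 0 x) := by
      rw [Set.uIcc_of_le hx, integrableOn_Icc_iff_integrableOn_Ioc]
      exact hgIntOn x
    have := intervalIntegral.continuousOn_primitive_interval hint
    exact (this.const_smul lam).congr (fun t _ => by simp [rhoLe, smul_eq_mul, hg])
  have hJint : IntervalIntegrable (fun t => (k:ℝ)/(1 - rhoLe f lam t)) volume 0 x := by
    apply ContinuousOn.intervalIntegrable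
    apply continuousOn_const.div (continuousOn_const.sub hrho_cont)
    intro t ht
    rw [Set.uIcc_of_le hx] at ht
    have h1 : rhoLe f lam t ≤ r := hrho_mono t x ht.1 ht.2
    have : rhoLe f lam t < 1 := lt_of_le_of_lt h1 hr1
    exact ne_of_gt (show (0:ℝ) < 1 - rhoLe f lam t by linarith)
  have hJ : (∫ t in (0:ℝ)..x, (k:ℝ)/(1 - rhoLe f lam t)) ≤ (k:ℝ) * x / (1-r) := by
    have hpt : ∀ t ∈ Set.Icc 0 x,
        (k:ℝ)/(1 - rhoLe f lam t) ≤ (k:ℝ)/(1-r) := by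
      intro t ht
      have h1 : rhoLe f lam t ≤ r := hrho_mono t x ht.1 ht.2
      apply div_le_div_of_nonneg_left (Nat.cast_nonneg k) hd
      linarith
    have h := intervalIntegral.integral_mono_on hx hJint
      (intervalIntegrable_const) hpt
    rw [intervalIntegral.integral_const, smul_eq_mul] at h
    calc (∫ t in (0:ℝ)..x, (k:ℝ)/(1 - rhoLe f lam t)) ≤ (x - 0) * ((k:ℝ)/(1-r)) := h
      _ = (k:ℝ) * x / (1-r) := by ring
  have hkx : (0:ℝ) ≤ (k:ℝ) * x := mul_nonneg (Nat.cast_nonneg k) hx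
  have h2 : (k:ℝ) * r * x / (1-r) ≤ (k:ℝ) * x / (1-r) := by
    rw [div_le_div_iff_of_pos_right hd]
    nlinarith
  have hB : 0 ≤ lam * x^2 * tailS f x / (2*(1-r)^2) := by positivity
  simp only [Ibound, Hbound, ← hr]
  have hsplit : (lam * (∫ t in (0:ℝ)..x, t ^ 2 * f t) + lam * x ^ 2 * tailS f x)
      / (2 * (1 - r) ^ 2)
      = (lam * ∫ t in (0:ℝ)..x, t ^ 2 * f t) / (2 * (1 - r) ^ 2)
        + lam * x ^ 2 * tailS f x / (2 * (1 - r) ^ 2) := by ring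
  have h3 : 2 * (k:ℝ) * x / (1-r) = (k:ℝ)*x/(1-r) + (k:ℝ)*x/(1-r) := by ring
  linarith
end

section
/- (Limit used in the proof of Lemma 6.2, unbounded case.) Assume f is continuous and strictly positive on (0,∞), so that x ↦ ρ_{≤x} is a continuous strictly increasing bijection from [0,∞) onto [0,ρ); for each λ ∈ (0,1/m) let x_λ > 0 be the unique solution of ρ_{≤x_λ} = ρ² (i.e. x_λ = G^{−1}(ρ) where G(x) = ρ_{≤x}/ρ). If the tail of S has upper Matuszewska index less than −2, expressed via the equivalent Potter-type bound — there exist constants C > 0, ε > 0 and x₀ > 0 such that F̄(γx) ≤ C·γ^{−(2+ε)}·F̄(x) for all x ≥ x₀ and all γ ≥ 1 — then lim_{λ → (1/m)⁻} ln(1/(1−ρ))·(1−ρ)·x_λ = 0, where ρ = λm. -/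
open MeasureTheory Filter
open Topology

/-- **Limit used in the proof of Lemma 6.2, unbounded case.**
For `x_λ = G⁻¹(ρ)`, i.e. the unique `x_λ > 0` with `ρ_{≤x_λ} = ρ²`, if the
tail of `S` has upper Matuszewska index less than `−2` (Potter-type bound),
then `lim_{λ → (1/m)⁻} ln(1/(1−ρ)) (1−ρ) x_λ = 0`, where `ρ = λm`. -/
theorem log_one_sub_rho_inverse_tendsto_zero
    (f : ℝ → ℝ) (m : ℝ)
    (hf_meas : Measurable f)
    (hf_nonneg : ∀ x, 0 ≤ f x)
    (hf_zero : ∀ x ≤ 0, f x = 0)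
    (hf_cont : ContinuousOn f (Set.Ioi 0))
    (hf_pos : ∀ x > (0:ℝ), 0 < f x)
    (hf_prob : ∫ t in Set.Ioi (0:ℝ), f t = 1)
    (hm_int : Integrable (fun t => t * f t) (volume.restrict (Set.Ioi 0)))
    (hm_def : m = ∫ t in Set.Ioi (0:ℝ), t * f t)
    (hm_pos : 0 < m)
    (hunbounded : ∀ x > (0:ℝ), 0 < tailS f x)
    (xfun : ℝ → ℝ)
    (hxfun : ∀ lam ∈ Set.Ioo 0 (1/m),
      0 < xfun lam ∧ rhoLe f lam (xfun lam) = (lam * m) ^ 2)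
    (hmatuszewska : ∃ C > (0:ℝ), ∃ ε > (0:ℝ), ∃ x₀ > (0:ℝ),
      ∀ x ≥ x₀, ∀ γ ≥ (1:ℝ), tailS f (γ * x) ≤ C * γ ^ (-(2 + ε)) * tailS f x) :
    Tendsto (fun lam => Real.log (1 / (1 - lam * m)) * (1 - lam * m) * xfun lam)
      (nhdsWithin (1/m) (Set.Iio (1/m))) (nhds 0) := by
  obtain ⟨C, hC, ε, hε, x₀, hx₀, hPot⟩ := hmatuszewska
  -- basic integrability of f
  have hInt_f : IntegrableOn f (Set.Ioi 0) volume := by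
    by_contra h
    rw [MeasureTheory.integral_undef h] at hf_prob
    exact one_ne_zero hf_prob.symm
  have hT_nonneg : ∀ x, 0 ≤ tailS f x := fun x =>
    setIntegral_nonneg measurableSet_Ioi fun t _ => hf_nonneg t
  -- splitting integrals over Ioi 0 at a point x > 0
  have hsplit : ∀ (g : ℝ → ℝ), IntegrableOn g (Set.Ioi 0) volume → ∀ x > (0:ℝ),
      ∫ t in Set.Ioi (0:ℝ), g t
        = (∫ t in Set.Ioc (0:ℝ) x, g t) + ∫ t in Set.Ioi x, g t := by
    intro g hg x hx
    rw [← Set.Ioc_union_Ioi_eq_Ioi hx.le,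
      MeasureTheory.setIntegral_union (Set.Ioc_disjoint_Ioi le_rfl) measurableSet_Ioi
        (hg.mono_set Set.Ioc_subset_Ioi_self) (hg.mono_set (Set.Ioi_subset_Ioi hx.le))]
  -- tail as 1 minus the primitive
  have hT_eq : ∀ x ≥ (0:ℝ), tailS f x = 1 - ∫ t in (0:ℝ)..x, f t := by
    intro x hx
    rcases hx.eq_or_lt with rfl | hx
    · simp [tailS, hf_prob]
    · have h := hsplit f hInt_f x hx
      rw [hf_prob] at h
      rw [intervalIntegral.integral_of_le hx.le]
      unfold tailS
      linarith
  -- derivative of the tail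
  have hT_deriv : ∀ x > (0:ℝ), HasDerivAt (tailS f) (-(f x)) x := by
    intro x hx
    have hii : IntervalIntegrable f volume 0 x := by
      rw [intervalIntegrable_iff_integrableOn_Ioc_of_le hx.le]
      exact hInt_f.mono_set Set.Ioc_subset_Ioi_self
    have hprim : HasDerivAt (fun u => ∫ t in (0:ℝ)..u, f t) (f x) x :=
      intervalIntegral.integral_hasDerivAt_right hii
        hf_meas.stronglyMeasurable.stronglyMeasurableAtFilter
        (hf_cont.continuousAt (isOpen_Ioi.mem_nhds hx))
    have h1 : HasDerivAt (fun u => 1 - ∫ t in (0:ℝ)..u, f t) (-(f x)) x := by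
      simpa using hprim.const_sub (1:ℝ)
    refine h1.congr_of_eventuallyEq ?_
    filter_upwards [isOpen_Ioi.mem_nhds hx] with u hu
    exact hT_eq u (le_of_lt hu)
  have hT_cont : ContinuousOn (tailS f) (Set.Ioi 0) := fun x hx =>
    (hT_deriv x hx).continuousAt.continuousWithinAt
  -- Potter bound in power form
  set D : ℝ := C * x₀ ^ (2 + ε) * tailS f x₀ with hD_def
  have hD : 0 < D :=
    mul_pos (mul_pos hC (Real.rpow_pos_of_pos hx₀ _)) (hunbounded x₀ hx₀)
  have hTbound : ∀ x ≥ x₀, tailS f x ≤ D * x ^ (-(2 + ε)) := by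
    intro x hx
    have hxpos : 0 < x := lt_of_lt_of_le hx₀ hx
    have hγ : (1:ℝ) ≤ x / x₀ := (one_le_div hx₀).2 hx
    have h := hPot x₀ le_rfl (x / x₀) hγ
    rw [div_mul_cancel₀ _ hx₀.ne'] at h
    have hrw : (x / x₀ : ℝ) ^ (-(2 + ε)) = x ^ (-(2 + ε)) * (x₀ ^ (2 + ε)) := by
      rw [Real.div_rpow hxpos.le hx₀.le, Real.rpow_neg hxpos.le, Real.rpow_neg hx₀.le]
      field_simp
    rw [hrw] at h
    calc tailS f x ≤ C * (x ^ (-(2 + ε)) * x₀ ^ (2 + ε)) * tailS f x₀ := h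
      _ = D * x ^ (-(2 + ε)) := by rw [hD_def]; ring
  -- integrability of the tail on Ioi y for y ≥ x₀
  have hT_int : ∀ y ≥ x₀, IntegrableOn (tailS f) (Set.Ioi y) volume := by
    intro y hy
    have hypos : 0 < y := lt_of_lt_of_le hx₀ hy
    refine Integrable.mono' ((integrableOn_Ioi_rpow_of_lt (a := -(2+ε)) (by linarith) hypos).const_mul D)
      ((hT_cont.mono (Set.Ioi_subset_Ioi hypos.le)).aestronglyMeasurable measurableSet_Ioi) ?_
    rw [ae_restrict_iff' measurableSet_Ioi]
    filter_upwards with t ht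
    rw [Real.norm_eq_abs, abs_of_nonneg (hT_nonneg t)]
    exact hTbound t (hy.trans ht.le)
  -- key tail-integral bound via integration by parts
  have hKey : ∀ y ≥ x₀, ∫ t in Set.Ioi y, t * f t ≤ 2 * D * y ^ (-(1 + ε)) := by
    intro y hy
    have hypos : 0 < y := lt_of_lt_of_le hx₀ hy
    have htf_int : IntegrableOn (fun t => t * f t) (Set.Ioi y) volume :=
      (show IntegrableOn (fun t => t * f t) (Set.Ioi 0) volume from hm_int).mono_set (Set.Ioi_subset_Ioi hypos.le)
    have hderiv : ∀ t ∈ Set.Ioi y, HasDerivAt (fun t => t * tailS f t)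
        (tailS f t - t * f t) t := by
      intro t ht
      have h : HasDerivAt (fun t => t * tailS f t) (1 * tailS f t + t * -(f t)) t :=
        HasDerivAt.mul (hasDerivAt_id' (x := t)) (hT_deriv t (hypos.trans ht))
      convert h using 1
      ring
    have hcont : ContinuousWithinAt (fun t => t * tailS f t) (Set.Ici y) y := by
      have h := HasDerivAt.mul (hasDerivAt_id' (x := y)) (hT_deriv y hypos)
      exact h.continuousAt.continuousWithinAt
    have hub : ∀ t ≥ x₀, t * tailS f t ≤ D * t ^ (-(1 + ε)) := by
      intro t ht
      have htpos : 0 < t := lt_of_lt_of_le hx₀ ht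
      calc t * tailS f t ≤ t * (D * t ^ (-(2 + ε))) :=
            mul_le_mul_of_nonneg_left (hTbound t ht) htpos.le
        _ = D * (t ^ (1:ℝ) * t ^ (-(2 + ε))) := by rw [Real.rpow_one]; ring
        _ = D * t ^ (-(1 + ε)) := by
            rw [← Real.rpow_add htpos]
            congr 1
            ring
    have htends : Tendsto (fun t => t * tailS f t) atTop (𝓝 0) := by
      have hlim : Tendsto (fun t : ℝ => D * t ^ (-(1 + ε))) atTop (𝓝 (D * 0)) :=
        (tendsto_rpow_neg_atTop (by linarith)).const_mul D
      rw [mul_zero] at hlim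
      refine squeeze_zero' ?_ ?_ hlim
      · filter_upwards [eventually_ge_atTop x₀] with t ht
        exact mul_nonneg ((hx₀.trans_le ht).le) (hT_nonneg t)
      · filter_upwards [eventually_ge_atTop x₀] with t ht
        exact hub t ht
    have hibp := MeasureTheory.integral_Ioi_of_hasDerivAt_of_tendsto hcont hderiv
      ((hT_int y hy).sub htf_int) htends
    rw [MeasureTheory.integral_sub (hT_int y hy) htf_int] at hibp
    -- hibp : ∫ T - ∫ t f = 0 - y * T y
    have hTy : y * tailS f y ≤ D * y ^ (-(1 + ε)) := hub y hy
    have hTint_le : ∫ t in Set.Ioi y, tailS f t ≤ D * y ^ (-(1 + ε)) := by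
      have h1 : ∫ t in Set.Ioi y, tailS f t
          ≤ ∫ t in Set.Ioi y, D * t ^ (-(2 + ε)) := by
        refine setIntegral_mono_on (hT_int y hy)
          ((integrableOn_Ioi_rpow_of_lt (a := -(2+ε)) (by linarith) hypos).const_mul D)
          measurableSet_Ioi ?_
        intro t ht
        exact hTbound t (hy.trans ht.le)
      have h2 : ∫ t in Set.Ioi y, D * t ^ (-(2 + ε))
          = D * (y ^ (-(1 + ε)) / (1 + ε)) := by
        rw [MeasureTheory.integral_const_mul, integral_Ioi_rpow_of_lt (a := -(2+ε)) (by linarith) hypos,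
          show -(2+ε)+(1:ℝ) = -(1+ε) by ring, neg_div_neg_eq]
      have h3 : D * (y ^ (-(1 + ε)) / (1 + ε)) ≤ D * y ^ (-(1 + ε)) := by
        refine mul_le_mul_of_nonneg_left ?_ hD.le
        refine div_le_self (Real.rpow_nonneg hypos.le _) (by linarith)
      linarith
    have : ∫ t in Set.Ioi y, t * f t
        = y * tailS f y + ∫ t in Set.Ioi y, tailS f t := by linarith
    rw [this]
    calc y * tailS f y + ∫ t in Set.Ioi y, tailS f t
        ≤ D * y ^ (-(1 + ε)) + D * y ^ (-(1 + ε)) := add_le_add hTy hTint_le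
      _ = 2 * D * y ^ (-(1 + ε)) := by ring
  -- the tail identity at x_lam
  have htail_eq : ∀ lam ∈ Set.Ioo (0:ℝ) (1/m),
      ∫ t in Set.Ioi (xfun lam), t * f t = m * (1 - lam * m) := by
    intro lam hlam
    obtain ⟨hy, hrho⟩ := hxfun lam hlam
    have hlam0 : (0:ℝ) < lam := hlam.1
    unfold rhoLe at hrho
    have hIoc : ∫ t in (0:ℝ)..(xfun lam), t * f t = lam * m ^ 2 := by
      apply mul_left_cancel₀ hlam0.ne'
      rw [hrho]
      ring
    have h := hsplit (fun t => t * f t) hm_int (xfun lam) hy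
    rw [← hm_def] at h
    rw [intervalIntegral.integral_of_le hy.le] at hIoc
    rw [hIoc] at h
    have h5 : ∫ t in Set.Ioi (xfun lam), t * f t = m - lam * m ^ 2 := by linarith
    rw [h5]
    ring
  -- bound on xfun
  set A : ℝ := (2 * D / m) ^ (1 / (1 + ε)) with hA_def
  have hA : 0 < A := Real.rpow_pos_of_pos (by positivity) _
  have hx_bound : ∀ lam ∈ Set.Ioo (0:ℝ) (1/m),
      xfun lam ≤ x₀ + A * (1 - lam * m) ^ (-(1 / (1 + ε))) := by
    intro lam hlam
    obtain ⟨hy, -⟩ := hxfun lam hlam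
    have hu0 : 0 < 1 - lam * m := by
      have : lam * m < 1 := by
        have := hlam.2
        rw [div_eq_mul_inv, one_mul] at this
        calc lam * m < m⁻¹ * m := by
              exact mul_lt_mul_of_pos_right this hm_pos
          _ = 1 := inv_mul_cancel₀ hm_pos.ne'
      linarith
    have hApos : 0 ≤ A * (1 - lam * m) ^ (-(1 / (1 + ε))) :=
      mul_nonneg hA.le (Real.rpow_nonneg hu0.le _)
    rcases le_or_gt (xfun lam) x₀ with h | h
    · linarith
    · have hkey := hKey (xfun lam) h.le
      rw [htail_eq lam hlam] at hkey
      set y := xfun lam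
      set u := 1 - lam * m
      have hypos : 0 < y := hy
      -- m * u ≤ 2D * y^(-(1+ε))  ⇒  y^(1+ε) ≤ 2D/(m u)
      have h1 : y ^ ((1:ℝ) + ε) * (m * u) ≤ 2 * D := by
        have := mul_le_mul_of_nonneg_left hkey (Real.rpow_nonneg hypos.le ((1:ℝ)+ε))
        calc y ^ ((1:ℝ) + ε) * (m * u) ≤ y ^ ((1:ℝ) + ε) * (2 * D * y ^ (-(1 + ε))) := this
          _ = 2 * D * (y ^ ((1:ℝ) + ε) * y ^ (-(1 + ε))) := by ring
          _ = 2 * D := by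
              rw [← Real.rpow_add hypos, show (1:ℝ) + ε + -(1 + ε) = 0 by ring,
                Real.rpow_zero, mul_one]
      have hmu : 0 < m * u := mul_pos hm_pos hu0
      have h2 : y ^ ((1:ℝ) + ε) ≤ 2 * D / (m * u) := by
        rw [le_div_iff₀ hmu]
        exact h1
      have h3 : y ≤ (2 * D / (m * u)) ^ (1 / (1 + ε)) := by
        have := Real.rpow_le_rpow (Real.rpow_nonneg hypos.le _) h2
          (by positivity : (0:ℝ) ≤ 1 / (1 + ε))
        rwa [← Real.rpow_mul hypos.le,
          mul_one_div, div_self (by linarith : (1:ℝ) + ε ≠ 0), Real.rpow_one] at this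
      have h4 : (2 * D / (m * u)) ^ (1 / (1 + ε)) = A * u ^ (-(1 / (1 + ε))) := by
        rw [hA_def, Real.rpow_neg hu0.le, ← Real.inv_rpow hu0.le,
          ← Real.mul_rpow (by positivity) (by positivity)]
        congr 1
        field_simp
      rw [h4] at h3
      linarith
  -- limit of the bound
  have hu_tendsto : Tendsto (fun lam => 1 - lam * m)
      (nhdsWithin (1/m) (Set.Iio (1/m))) (nhdsWithin 0 (Set.Ioi 0)) := by
    refine tendsto_nhdsWithin_of_tendsto_nhds_of_eventually_within (fun lam => 1 - lam * m) ?_ ?_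
    · have : Tendsto (fun lam : ℝ => 1 - lam * m) (nhds (1/m)) (nhds (1 - (1/m) * m)) :=
        (tendsto_const_nhds.sub ((continuous_id.mul continuous_const).tendsto _))
      rw [show (1:ℝ) - 1/m * m = 0 by field_simp; norm_num] at this
      exact this.mono_left nhdsWithin_le_nhds
    · filter_upwards [self_mem_nhdsWithin] with lam hlam
      have : lam * m < 1 := by
        have h := hlam
        rw [Set.mem_Iio, div_eq_mul_inv, one_mul] at h
        calc lam * m < m⁻¹ * m := mul_lt_mul_of_pos_right h hm_pos
          _ = 1 := inv_mul_cancel₀ hm_pos.ne'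
      simpa [sub_pos] using this
  have hφ : Tendsto (fun u : ℝ => (-Real.log u) * (u * x₀ + A * u ^ (ε / (1 + ε))))
      (nhdsWithin 0 (Set.Ioi 0)) (𝓝 0) := by
    have h1 := tendsto_log_mul_rpow_nhdsGT_zero (r := 1) one_pos
    have h2 := tendsto_log_mul_rpow_nhdsGT_zero (r := ε / (1 + ε)) (by positivity)
    have hcomb : Tendsto (fun u : ℝ =>
        -((Real.log u * u ^ (1:ℝ)) * x₀) - (Real.log u * u ^ (ε / (1 + ε))) * A)
        (nhdsWithin 0 (Set.Ioi 0)) (𝓝 (-(0 * x₀) - 0 * A)) :=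
      ((h1.mul_const x₀).neg).sub (h2.mul_const A)
    rw [show -((0:ℝ) * x₀) - 0 * A = 0 by ring] at hcomb
    refine hcomb.congr' ?_
    filter_upwards [self_mem_nhdsWithin] with u hu
    rw [Set.mem_Ioi] at hu
    rw [Real.rpow_one]
    ring
  have hB_tendsto : Tendsto (fun lam => (-Real.log (1 - lam * m)) *
      ((1 - lam * m) * x₀ + A * (1 - lam * m) ^ (ε / (1 + ε))))
      (nhdsWithin (1/m) (Set.Iio (1/m))) (𝓝 0) := hφ.comp hu_tendsto
  -- squeeze
  have hev : ∀ᶠ lam in nhdsWithin (1/m) (Set.Iio (1/m)), lam ∈ Set.Ioo (0:ℝ) (1/m) := by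
    have h1 : ∀ᶠ lam in nhdsWithin (1/m) (Set.Iio (1/m)), lam ∈ Set.Ioi (0:ℝ) := by
      apply eventually_nhdsWithin_of_eventually_nhds
      exact isOpen_Ioi.eventually_mem (by positivity : (0:ℝ) < 1/m)
    filter_upwards [h1, self_mem_nhdsWithin] with lam h1 h2
    exact ⟨h1, h2⟩
  refine squeeze_zero' ?_ ?_ hB_tendsto
  · filter_upwards [hev] with lam hlam
    obtain ⟨hy, -⟩ := hxfun lam hlam
    have hu0 : 0 < 1 - lam * m := by
      have : lam * m < 1 := by
        calc lam * m < (1/m) * m := mul_lt_mul_of_pos_right hlam.2 hm_pos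
          _ = 1 := by field_simp
      linarith
    have hu1 : 1 - lam * m ≤ 1 := by nlinarith [hlam.1, hm_pos]
    have hlog : 0 ≤ Real.log (1 / (1 - lam * m)) := by
      rw [one_div, Real.log_inv]
      exact neg_nonneg.2 (Real.log_nonpos hu0.le hu1)
    exact mul_nonneg (mul_nonneg hlog hu0.le) hy.le
  · filter_upwards [hev] with lam hlam
    obtain ⟨hy, -⟩ := hxfun lam hlam
    have hu0 : 0 < 1 - lam * m := by
      have : lam * m < 1 := by
        calc lam * m < (1/m) * m := mul_lt_mul_of_pos_right hlam.2 hm_pos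
          _ = 1 := by field_simp
      linarith
    have hu1 : 1 - lam * m ≤ 1 := by nlinarith [hlam.1, hm_pos]
    have hlog : 0 ≤ -Real.log (1 - lam * m) :=
      neg_nonneg.2 (Real.log_nonpos hu0.le hu1)
    have hxb := hx_bound lam hlam
    set u := 1 - lam * m
    have hrw : Real.log (1/u) = -Real.log u := by rw [one_div, Real.log_inv]
    rw [hrw]
    have hmain : u * xfun lam ≤ u * x₀ + A * u ^ (ε / (1 + ε)) := by
      have h1 : u * xfun lam ≤ u * (x₀ + A * u ^ (-(1 / (1 + ε)))) :=
        mul_le_mul_of_nonneg_left hxb hu0.le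
      have h2 : u * (A * u ^ (-(1 / (1 + ε)))) = A * u ^ (ε / (1 + ε)) := by
        rw [show u * (A * u ^ (-(1 / (1 + ε)))) = A * (u ^ (1:ℝ) * u ^ (-(1 / (1 + ε)))) by
          rw [Real.rpow_one]; ring, ← Real.rpow_add hu0]
        congr 2
        field_simp
        ring
      calc u * xfun lam ≤ u * x₀ + u * (A * u ^ (-(1 / (1 + ε)))) := by
            nlinarith [h1]
        _ = u * x₀ + A * u ^ (ε / (1 + ε)) := by rw [h2]
    calc -Real.log u * u * xfun lam = -Real.log u * (u * xfun lam) := by ring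
      _ ≤ -Real.log u * (u * x₀ + A * u ^ (ε / (1 + ε))) :=
          mul_le_mul_of_nonneg_left hmain hlog
end
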